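/- Let R be a discrete valuation ring with maximal ideal P = Rp. Every indecomposable pseudo-absorbing primary multiplication R-module is isomorphic to R or to R/P^n for some n ≥ 1. -/

import Mathlib

/-- A proper ideal `I` is 2-absorbing primary if `a*b*c ∈ I` implies
`a*b ∈ I` or `a*c ∈ √I` or `b*c ∈ √I`. -/
def IsTwoAbsPrimary {R : Type*} [CommRing R] (I : Ideal R) : Prop :=
  I ≠ ⊤ ∧ ∀ a b c : R, a * b * c ∈ I → a * b ∈ I ∨ a * c ∈ I.radical ∨ b * c ∈ I.radical

/-- A proper submodule `N` of `M` is pseudo-absorbing primary if `(N :_R M)`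
is a 2-absorbing primary ideal of `R`. -/
def IsPseudoAbsPrimary {R M : Type*} [CommRing R] [AddCommGroup M] [Module R M]
    (N : Submodule R M) : Prop :=
  N ≠ ⊤ ∧ IsTwoAbsPrimary (N.colon ⊤)

/-- `M` is a pseudo-absorbing primary multiplication module if every
pseudo-absorbing primary submodule `N` satisfies `N = I • M` for some ideal `I`. -/
def IsPAPMultiplication (R M : Type*) [CommRing R] [AddCommGroup M] [Module R M] : Prop :=
  ∀ N : Submodule R M, IsPseudoAbsPrimary N → ∃ I : Ideal R, N = I • (⊤ : Submodule R M)

/-- In a DVR, every proper ideal is 2-absorbing primary. -/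
lemma dvr_twoAbsPrimary {R : Type*} [CommRing R] [IsDomain R] [IsDiscreteValuationRing R]
    (I : Ideal R) (hI : I ≠ ⊤) : IsTwoAbsPrimary I := by
  refine ⟨hI, fun a b c habc => ?_⟩
  by_cases ha : IsUnit a
  · obtain ⟨u, rfl⟩ := ha
    refine Or.inr (Or.inr (Ideal.le_radical ?_))
    have h := I.mul_mem_left (↑u⁻¹) habc
    have : (↑u⁻¹ : R) * (↑u * b * c) = b * c := by
      rw [← mul_assoc, ← mul_assoc, Units.inv_mul, one_mul]
    rwa [this] at h
  by_cases hb : IsUnit b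
  · obtain ⟨u, rfl⟩ := hb
    refine Or.inr (Or.inl (Ideal.le_radical ?_))
    have h := I.mul_mem_left (↑u⁻¹) habc
    have : (↑u⁻¹ : R) * (a * ↑u * c) = a * c := by
      rw [show a * ↑u * c = ↑u * (a * c) by ring, ← mul_assoc, Units.inv_mul, one_mul]
    rwa [this] at h
  by_cases hc : IsUnit c
  · obtain ⟨u, rfl⟩ := hc
    refine Or.inl ?_
    have h := I.mul_mem_left (↑u⁻¹) habc
    have : (↑u⁻¹ : R) * (a * b * ↑u) = a * b := by
      rw [show a * b * ↑u = ↑u * (a * b) by ring, ← mul_assoc, Units.inv_mul, one_mul]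
    rwa [this] at h
  -- none of a, b, c is a unit
  by_cases hI0 : I = ⊥
  · subst hI0
    rw [Ideal.mem_bot] at habc
    rcases mul_eq_zero.mp habc with h | h
    · exact Or.inl (Ideal.mem_bot.mpr h)
    · exact Or.inr (Or.inr (Ideal.le_radical (Ideal.mem_bot.mpr (by rw [h, mul_zero]))))
  · obtain ⟨ϖ, hϖ⟩ := IsDiscreteValuationRing.exists_irreducible R
    obtain ⟨n, hn⟩ := IsDiscreteValuationRing.ideal_eq_span_pow_irreducible hI0 hϖ
    have hP : IsLocalRing.maximalIdeal R = Ideal.span {ϖ} :=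
      (IsDiscreteValuationRing.irreducible_iff_uniformizer ϖ).mp hϖ
    have hPrad : IsLocalRing.maximalIdeal R ≤ I.radical := by
      intro x hx
      refine Ideal.mem_radical_iff.mpr ⟨n, ?_⟩
      rw [hn, Ideal.mem_span_singleton]
      rw [hP, Ideal.mem_span_singleton] at hx
      exact pow_dvd_pow_of_dvd hx n
    have haP : a ∈ IsLocalRing.maximalIdeal R := ha
    exact Or.inr (Or.inl ((I.radical).mul_mem_right c (hPrad haP)))

/-- Over a DVR R with maximal ideal P, every indecomposable pseudo-absorbing
primary multiplication R-module is isomorphic to R or to R/Pⁿ for some n ≥ 1. -/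
theorem stmt_10 {R M : Type*} [CommRing R] [IsDomain R] [IsDiscreteValuationRing R]
    [AddCommGroup M] [Module R M] [Nontrivial M]
    (hind : ∀ N N' : Submodule R M, IsCompl N N' → N = ⊥ ∨ N = ⊤)
    (hM : IsPAPMultiplication R M) :
    Nonempty (M ≃ₗ[R] R) ∨
    ∃ n : ℕ, 1 ≤ n ∧
      Nonempty (M ≃ₗ[R] R ⧸ (IsLocalRing.maximalIdeal R ^ n : Ideal R)) := by
  obtain ⟨ϖ, hϖ⟩ := IsDiscreteValuationRing.exists_irreducible R
  have hP : IsLocalRing.maximalIdeal R = Ideal.span {ϖ} :=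
    (IsDiscreteValuationRing.irreducible_iff_uniformizer ϖ).mp hϖ
  set P := IsLocalRing.maximalIdeal R with hPdef
  -- every proper submodule is of the form I • ⊤
  have hproper : ∀ N : Submodule R M, N ≠ ⊤ → ∃ I : Ideal R, N = I • (⊤ : Submodule R M) := by
    intro N hN
    refine hM N ⟨hN, dvr_twoAbsPrimary _ ?_⟩
    intro h
    apply hN
    rw [eq_top_iff]
    intro x _
    have h1 : (1 : R) ∈ N.colon ⊤ := h ▸ Submodule.mem_top
    simpa using Submodule.mem_colon.mp h1 x trivial
  -- M is cyclic: there is x with span {x} = ⊤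
  obtain ⟨x, hx0, hspan⟩ : ∃ x : M, x ≠ 0 ∧ Submodule.span R {x} = ⊤ := by
    by_cases hPt : P • (⊤ : Submodule R M) = ⊤
    · -- Nakayama-style contradiction
      exfalso
      have hpow : ∀ n : ℕ, (P ^ n) • (⊤ : Submodule R M) = ⊤ := by
        intro n
        induction n with
        | zero => simp
        | succ k ih => rw [pow_succ, ← Ideal.smul_eq_mul, Submodule.smul_assoc, hPt, ih]
      obtain ⟨y, hy0⟩ := exists_ne (0 : M)
      have hyspan : Submodule.span R {y} = ⊤ := by
        by_contra hne
        obtain ⟨I, hI⟩ := hproper _ hne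
        by_cases hI0 : I = ⊥
        · rw [hI0] at hI
          simp at hI
          exact hy0 (by simpa [hI] using Submodule.mem_span_singleton_self y)
        · obtain ⟨n, hn⟩ := IsDiscreteValuationRing.ideal_eq_span_pow_irreducible hI0 hϖ
          have hIP : I = P ^ n := by rw [hn, hP, Ideal.span_singleton_pow]
          exact hne (by rw [hI, hIP, hpow])
      have hfg : (⊤ : Submodule R M).FG := ⟨{y}, by simpa using hyspan⟩
      have hjac : P ≤ Ideal.jacobson ⊥ := IsLocalRing.maximalIdeal_le_jacobson ⊥
      have := Submodule.eq_bot_of_le_smul_of_le_jacobson_bot P ⊤ hfg hPt.ge hjac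
      have : y ∈ (⊥ : Submodule R M) := this ▸ Submodule.mem_top
      exact hy0 (by simpa using this)
    · obtain ⟨x, hx⟩ : ∃ x : M, x ∉ P • (⊤ : Submodule R M) := by
        by_contra h
        push_neg at h
        exact hPt (eq_top_iff.mpr fun y _ => h y)
      have hx0 : x ≠ 0 := fun h => hx (h ▸ zero_mem _)
      refine ⟨x, hx0, ?_⟩
      by_contra hne
      obtain ⟨I, hI⟩ := hproper _ hne
      have hIt : I ≠ ⊤ := by
        rintro rfl
        simp at hI
        exact hne hI
      have hle : Submodule.span R {x} ≤ P • (⊤ : Submodule R M) := by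
        rw [hI]
        exact Submodule.smul_mono_left (IsLocalRing.le_maximalIdeal hIt)
      exact hx (hle (Submodule.mem_span_singleton_self x))
  -- now build the equivalence
  have e : M ≃ₗ[R] R ⧸ Ideal.torsionOf R M x :=
    ((Ideal.quotTorsionOfEquivSpanSingleton R M x).trans
      ((LinearEquiv.ofEq _ _ hspan).trans Submodule.topEquiv)).symm
  by_cases hJ0 : Ideal.torsionOf R M x = ⊥
  · exact Or.inl ⟨e.trans (Submodule.quotEquivOfEqBot _ hJ0)⟩
  · obtain ⟨n, hn⟩ := IsDiscreteValuationRing.ideal_eq_span_pow_irreducible hJ0 hϖ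
    have hJt : Ideal.torsionOf R M x ≠ ⊤ := by
      intro h
      exact hx0 (by simpa using (h ▸ Submodule.mem_top : (1:R) ∈ Ideal.torsionOf R M x))
    have hn1 : 1 ≤ n := by
      rcases Nat.eq_zero_or_pos n with h | h
      · exfalso; apply hJt; rw [hn, h]; simp
      · exact h
    have hJP : Ideal.torsionOf R M x = P ^ n := by
      rw [hn, hP, Ideal.span_singleton_pow]
    exact Or.inr ⟨n, hn1, ⟨e.trans (Submodule.quotEquivOfEq _ _ hJP)⟩⟩
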